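/- arXiv:2604.03811 — 2 statements merged into one kernel-verified Lean document; each statement's English description precedes it below -/
import Mathlib

section
/- Let E : [0,∞) → [0,∞) be nonincreasing and suppose there exist T > 0, C > 0, and α > 0 such that E(t)^(1+α) ≤ C·(E(t) − E(t+T)) for all t ≥ 0. Then there exists a constant C_T > 0 such that E(t) ≤ C_T·(1+t)^(−1/α) for all t ≥ 0. -/
open Real

/-- Bernoulli-type inequality: for `0 < s ≤ 1` and `α > 0`, `1 + α(1-s) ≤ s^(-α)`. -/
lemma bern_aux {s α : ℝ} (hs : 0 < s) (hs1 : s ≤ 1) (hα : 0 < α) :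
    1 + α * (1 - s) ≤ s ^ (-α) := by
  rcases le_or_gt 1 α with hα1 | hα1
  · -- α ≥ 1 : use Bernoulli from below with u = (1-s)/s ≥ 1-s
    have hu : (0:ℝ) ≤ (1 - s) / s := div_nonneg (by linarith) hs.le
    have hb := one_add_mul_self_le_rpow_one_add (s := (1 - s) / s) (by linarith) hα1
    have h1u : 1 + (1 - s) / s = s⁻¹ := by field_simp; ring
    rw [h1u] at hb
    have hinv : s⁻¹ ^ α = s ^ (-α) := by
      rw [Real.inv_rpow hs.le, ← Real.rpow_neg hs.le]
    rw [hinv] at hb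
    have huge : 1 - s ≤ (1 - s) / s := by
      rw [le_div_iff₀ hs]; nlinarith
    nlinarith [mul_le_mul_of_nonneg_left huge hα.le]
  · -- α < 1 : use Bernoulli from above on s^α
    have hb := rpow_one_add_le_one_add_mul_self (s := s - 1) (by linarith) hα.le hα1.le
    have h1s : 1 + (s - 1) = s := by ring
    rw [h1s] at hb
    have hD : 0 < 1 - α * (1 - s) := by nlinarith
    have hsa : 0 < s ^ α := Real.rpow_pos_of_pos hs α
    have hkey : s ^ α * (1 + α * (1 - s)) ≤ 1 := by
      calc s ^ α * (1 + α * (1 - s))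
          ≤ (1 - α * (1 - s)) * (1 + α * (1 - s)) := by
            apply mul_le_mul_of_nonneg_right _ (by nlinarith)
            linarith
        _ = 1 - (α * (1 - s))^2 := by ring
        _ ≤ 1 := by nlinarith
    have h2 : (1 + α * (1 - s)) * s ^ α ≤ 1 := by nlinarith
    have h3 : s ^ (-α) = (s ^ α)⁻¹ := Real.rpow_neg hs.le α
    rw [h3]
    calc 1 + α * (1 - s) = (1 + α * (1 - s)) * s ^ α * (s ^ α)⁻¹ := by field_simp
      _ ≤ 1 * (s ^ α)⁻¹ := by
          apply mul_le_mul_of_nonneg_right h2 (by positivity)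
      _ = (s ^ α)⁻¹ := one_mul _

/-- The key step: from `a^(1+α) ≤ C(a-b)` with `0 < b ≤ a`, get `a^(-α) + α/C ≤ b^(-α)`. -/
lemma step_aux {a b C α : ℝ} (hb : 0 < b) (hba : b ≤ a) (hC : 0 < C) (hα : 0 < α)
    (h : a ^ (1 + α) ≤ C * (a - b)) : a ^ (-α) + α / C ≤ b ^ (-α) := by
  have ha : 0 < a := hb.trans_le hba
  set s := b / a with hsdef
  have hs : 0 < s := div_pos hb ha
  have hs1 : s ≤ 1 := (div_le_one ha).mpr hba
  have hbern := bern_aux hs hs1 hα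
  have hbsa : b = s * a := by rw [hsdef, div_mul_cancel₀ _ ha.ne']
  have hbpow : b ^ (-α) = s ^ (-α) * a ^ (-α) := by
    rw [hbsa, Real.mul_rpow hs.le ha.le]
  have h1s : 1 - s = (a - b) / a := by rw [hsdef, eq_div_iff ha.ne']; field_simp
  have hab : a ^ (1 + α) / C ≤ a - b := by
    rw [div_le_iff₀ hC]; linarith
  have hpow : a ^ (1 + α) * a ^ (-α) = a := by
    rw [← Real.rpow_add ha]; norm_num
  have hapow : 0 < a ^ (-α) := Real.rpow_pos_of_pos ha _
  have hstep : α / C ≤ α * (1 - s) * a ^ (-α) := by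
    rw [h1s]
    have h2 : a ^ (1 + α) / C / a * a ^ (-α) ≤ (a - b) / a * a ^ (-α) := by
      apply mul_le_mul_of_nonneg_right _ hapow.le
      exact div_le_div_of_nonneg_right hab ha.le
    have h3 : a ^ (1 + α) / C / a * a ^ (-α) = 1 / C := by
      rw [div_div, div_mul_eq_mul_div, hpow, mul_comm C a, div_mul_eq_div_div,
        div_self ha.ne']
    calc α / C = α * (1 / C) := by ring
      _ ≤ α * ((a - b) / a * a ^ (-α)) := by
          apply mul_le_mul_of_nonneg_left _ hα.le
          rw [← h3]; exact h2
      _ = α * ((a - b) / a) * a ^ (-α) := by ring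
  calc a ^ (-α) + α / C ≤ a ^ (-α) + α * (1 - s) * a ^ (-α) := by linarith
    _ = (1 + α * (1 - s)) * a ^ (-α) := by ring
    _ ≤ s ^ (-α) * a ^ (-α) := mul_le_mul_of_nonneg_right hbern hapow.le
    _ = b ^ (-α) := hbpow.symm

theorem stmt3 (E : ℝ → ℝ) (T C α : ℝ) (hT : 0 < T) (hC : 0 < C) (hα : 0 < α)
    (hE_nonneg : ∀ t, 0 ≤ t → 0 ≤ E t)
    (hE_mono : AntitoneOn E (Set.Ici 0))
    (hineq : ∀ t, 0 ≤ t → E t ^ (1 + α) ≤ C * (E t - E (t + T))) :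
    ∃ C_T > 0, ∀ t, 0 ≤ t → E t ≤ C_T * (1 + t) ^ (-1 / α) := by
  have hneg : (-1 : ℝ) / α = -(1/α) := by ring
  set a : ℕ → ℝ := fun n => E (n * T) with ha
  have hnT : ∀ n : ℕ, (0:ℝ) ≤ n * T := fun n => by positivity
  have ha_nonneg : ∀ n, 0 ≤ a n := fun n => hE_nonneg _ (hnT n)
  have ha_anti : ∀ m n : ℕ, m ≤ n → a n ≤ a m := fun m n hmn =>
    hE_mono (hnT m) (hnT n)
      (mul_le_mul_of_nonneg_right (by exact_mod_cast hmn) hT.le)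
  have hkey : ∀ n : ℕ, 0 < a n → (n : ℝ) * α / C ≤ a n ^ (-α) := by
    intro n
    induction n with
    | zero => intro _; simpa using Real.rpow_nonneg (ha_nonneg 0) (-α)
    | succ n ih =>
      intro hpos
      have hposn : 0 < a n := lt_of_lt_of_le hpos (ha_anti n (n+1) (Nat.le_succ n))
      have hih := ih hposn
      have hstepineq : a n ^ (1 + α) ≤ C * (a n - a (n+1)) := by
        have h := hineq (n * T) (hnT n)
        have heq : ((n:ℝ) * T + T) = ((n+1 : ℕ) : ℝ) * T := by push_cast; ring
        rw [heq] at h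
        exact h
      have hst := step_aux hpos (ha_anti n (n+1) (Nat.le_succ n)) hC hα hstepineq
      calc ((n+1 : ℕ) : ℝ) * α / C = (n:ℝ) * α / C + α / C := by push_cast; ring
        _ ≤ a (n+1) ^ (-α) := by linarith
  have hbound : ∀ n : ℕ, 1 ≤ n → a n ≤ ((n:ℝ) * α / C) ^ (-(1/α)) := by
    intro n hn
    have hncast : (0:ℝ) < (n:ℝ) := by exact_mod_cast hn
    have hnpos : (0:ℝ) < (n:ℝ) * α / C := by positivity
    rcases eq_or_lt_of_le (ha_nonneg n) with h0 | hpos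
    · rw [← h0]; exact (Real.rpow_pos_of_pos hnpos _).le
    · have hk := hkey n hpos
      have hmono := Real.rpow_le_rpow_of_nonpos hnpos hk
        (by rw [neg_nonpos]; positivity : -(1/α) ≤ 0)
      have heq : (a n ^ (-α)) ^ (-(1/α)) = a n := by
        rw [← Real.rpow_mul hpos.le]
        have : (-α) * -(1/α) = 1 := by field_simp
        rw [this, Real.rpow_one]
      rwa [heq] at hmono
  set K₁ : ℝ := (E 0 + 1) * (1+T) ^ (1/α) with hK₁
  set K₂ : ℝ := (C * (1+2*T) / α) ^ (1/α) with hK₂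
  have hK₁pos : 0 < K₁ := by
    have hE0 : 0 ≤ E 0 := hE_nonneg 0 le_rfl
    have : (0:ℝ) < (1+T) ^ (1/α) := Real.rpow_pos_of_pos (by linarith) _
    positivity
  have hK₂pos : 0 < K₂ := Real.rpow_pos_of_pos (by positivity) _
  refine ⟨K₁ + K₂, by positivity, ?_⟩
  intro t ht
  set n : ℕ := ⌊t / T⌋₊ with hn
  have htT : 0 ≤ t / T := div_nonneg ht hT.le
  have hlow : (n:ℝ) * T ≤ t := by
    rw [← le_div_iff₀ hT]; exact Nat.floor_le htT
  have hhigh : t < ((n:ℝ) + 1) * T := by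
    rw [← div_lt_iff₀ hT]; exact Nat.lt_floor_add_one _
  have hEt : E t ≤ a n := hE_mono (hnT n) ht hlow
  have h1t : (0:ℝ) < 1 + t := by linarith
  have hpow1t : (0:ℝ) < (1+t) ^ (-(1/α)) := Real.rpow_pos_of_pos h1t _
  rw [hneg]
  rcases Nat.eq_zero_or_pos n with h0 | h1
  · -- t < T case
    have htT' : t < T := by
      have := hhigh; rw [h0] at this; push_cast at this; linarith
    have hcomp : (1+T) ^ (-(1/α)) ≤ (1+t) ^ (-(1/α)) :=
      Real.rpow_le_rpow_of_nonpos h1t (by linarith) (by rw [neg_nonpos]; positivity)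
    have hcalc : K₁ * (1+T) ^ (-(1/α)) = E 0 + 1 := by
      rw [hK₁, mul_assoc, ← Real.rpow_add (by linarith : (0:ℝ) < 1+T)]
      simp
    have hEt0 : E t ≤ E 0 := hE_mono (Set.mem_Ici.mpr le_rfl) ht ht
    calc E t ≤ E 0 + 1 := by linarith
      _ = K₁ * (1+T) ^ (-(1/α)) := hcalc.symm
      _ ≤ K₁ * (1+t) ^ (-(1/α)) := mul_le_mul_of_nonneg_left hcomp hK₁pos.le
      _ ≤ (K₁ + K₂) * (1+t) ^ (-(1/α)) := by nlinarith
  · -- n ≥ 1 case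
    have hncast : (1:ℝ) ≤ (n:ℝ) := by exact_mod_cast h1
    have hb := hbound n h1
    have h1t2 : 1 + t ≤ (n:ℝ) * (1 + 2*T) := by nlinarith
    have hnM : (0:ℝ) < (n:ℝ) * (1 + 2*T) := by nlinarith
    have hcomp : ((n:ℝ) * (1+2*T)) ^ (-(1/α)) ≤ (1+t) ^ (-(1/α)) :=
      Real.rpow_le_rpow_of_nonpos h1t h1t2 (by rw [neg_nonpos]; positivity)
    have hid : ((n:ℝ) * α / C) ^ (-(1/α)) = K₂ * ((n:ℝ) * (1+2*T)) ^ (-(1/α)) := by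
      have hx : (0:ℝ) < (n:ℝ) * α / C := by positivity
      rw [Real.rpow_neg hx.le, Real.rpow_neg hnM.le, hK₂,
        ← Real.inv_rpow hx.le, ← Real.inv_rpow hnM.le,
        ← Real.mul_rpow (by positivity) (by positivity)]
      congr 1
      field_simp
    calc E t ≤ ((n:ℝ) * α / C) ^ (-(1/α)) := le_trans hEt hb
      _ = K₂ * ((n:ℝ) * (1+2*T)) ^ (-(1/α)) := hid
      _ ≤ K₂ * (1+t) ^ (-(1/α)) := mul_le_mul_of_nonneg_left hcomp hK₂pos.le
      _ ≤ (K₁ + K₂) * (1+t) ^ (-(1/α)) := by nlinarith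
end

section
/- Let H be a real Hilbert space and A : D(A) ⊆ H → H a densely defined positive self-adjoint operator admitting square root A^(1/2), with ‖v‖ ≤ C_P·‖A^(1/2)v‖ for all v ∈ D(A^(1/2)) (Poincaré-type inequality with constant C_P). Let λ > 0 and f ∈ D(A^(1/2)), g ∈ H, and suppose u, v ∈ D(A) solve λu − v = f and λv + Au + ρ·v = g where ρ ≥ 0 is a constant. Then ‖A^(1/2)v‖ ≤ C_P·λ·‖g‖ + ‖A^(1/2)f‖ and ‖A^(1/2)u‖ ≤ (1/λ)·(C_P·λ·‖g‖ + 2‖A^(1/2)f‖). -/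
/-- `S` plays the role of the square root `A^(1/2)` of the positive self-adjoint
operator `A = S ∘ S`. -/
theorem stmt14 {H : Type*} [NormedAddCommGroup H] [InnerProductSpace ℝ H] [CompleteSpace H]
    (S : H →L[ℝ] H) (hS : IsSelfAdjoint S)
    (hS_pos : ∀ w : H, 0 ≤ (inner ℝ (S w) (w) : ℝ))
    (C_P : ℝ) (hCP : 0 < C_P)
    (hPoincare : ∀ w : H, ‖w‖ ≤ C_P * ‖S w‖)
    (l : ℝ) (hl : 0 < l) (ρ : ℝ) (hρ : 0 ≤ ρ)
    (u v f g : H)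
    (heq1 : l • u - v = f)
    (heq2 : l • v + S (S u) + ρ • v = g) :
    ‖S v‖ ≤ C_P * l * ‖g‖ + ‖S f‖ ∧
    ‖S u‖ ≤ (1 / l) * (C_P * l * ‖g‖ + 2 * ‖S f‖) := by
  have hsym : ∀ x y : H, (inner ℝ (S x) y : ℝ) = inner ℝ x (S y) := fun x y => by
    conv_lhs => rw [← hS.adjoint_eq]
    rw [ContinuousLinearMap.adjoint_inner_left]
  have h1 : l • u = f + v := sub_eq_iff_eq_add.mp heq1
  have hSu : l • S u = S f + S v := by rw [← map_smul, h1, map_add]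
  -- inner product of heq2 with v
  have key : l * inner ℝ v v + inner ℝ (S u) (S v) + ρ * inner ℝ v v = (inner ℝ g v : ℝ) := by
    have := congrArg (fun w : H => (inner ℝ w v : ℝ)) heq2
    simpa [inner_add_left, real_inner_smul_left, hsym (S u) v] using this
  have hSuSv : l * (inner ℝ (S u) (S v) : ℝ) = inner ℝ (S f) (S v) + ‖S v‖ ^ 2 := by
    rw [← real_inner_smul_left, hSu, inner_add_left, real_inner_self_eq_norm_sq]
  have hvv : (0:ℝ) ≤ inner ℝ v v := real_inner_self_nonneg
  have hgv : (inner ℝ g v : ℝ) ≤ ‖g‖ * (C_P * ‖S v‖) :=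
    (real_inner_le_norm g v).trans (by
      have := hPoincare v
      nlinarith [norm_nonneg g])
  have hfv : -(inner ℝ (S f) (S v) : ℝ) ≤ ‖S f‖ * ‖S v‖ := by
    have := real_inner_le_norm (-(S f)) (S v)
    simpa [inner_neg_left] using this
  have hsq : ‖S v‖ ^ 2 ≤ (C_P * l * ‖g‖ + ‖S f‖) * ‖S v‖ := by
    nlinarith [key, hSuSv, hvv, hgv, hfv, hl.le, hρ,
      mul_nonneg (mul_nonneg hl.le hl.le) hvv, mul_nonneg (mul_nonneg hl.le hρ) hvv,
      mul_le_mul_of_nonneg_left hgv hl.le]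
  have h₁ : ‖S v‖ ≤ C_P * l * ‖g‖ + ‖S f‖ := by
    rcases eq_or_lt_of_le (norm_nonneg (S v)) with h | h
    · nlinarith [norm_nonneg (S f), mul_nonneg (mul_nonneg hCP.le hl.le) (norm_nonneg g)]
    · nlinarith
  refine ⟨h₁, ?_⟩
  have h2 : l * ‖S u‖ = ‖S f + S v‖ := by
    rw [← hSu, norm_smul, Real.norm_of_nonneg hl.le]
  have h3 : l * ‖S u‖ ≤ C_P * l * ‖g‖ + 2 * ‖S f‖ := by
    rw [h2]
    calc ‖S f + S v‖ ≤ ‖S f‖ + ‖S v‖ := norm_add_le _ _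
      _ ≤ C_P * l * ‖g‖ + 2 * ‖S f‖ := by nlinarith
  rw [div_mul_eq_mul_div, one_mul, le_div_iff₀ hl, mul_comm]
  exact h3
end
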